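/- If a probability density function g on R^d satisfies |P_g(B(x,r)) - c_d r^d g(x)| <= C_1 r^{d+2} for all x and r > 0 (with C_1 > 0 a constant), then g is uniformly bounded: g(x) <= (1 + d/2) / (c_d (d/(2C_1))^{d/(d+2)}) for all x. -/

import Mathlib

open MeasureTheory Metric Real

theorem density_uniform_bound_of_local_mass_approx
    (d : ℕ) (hd : 0 < d) (g : EuclideanSpace ℝ (Fin d) → ℝ) (C₁ : ℝ) (hC₁ : 0 < C₁)
    (hg_nonneg : ∀ x, 0 ≤ g x)
    (hg_integrable : Integrable g)
    (hg_int : ∫ x, g x = 1)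
    (hP : ∀ (x : EuclideanSpace ℝ (Fin d)) (r : ℝ), 0 < r →
      |(∫ y in closedBall x r, g y) -
          (volume (ball (0 : EuclideanSpace ℝ (Fin d)) 1)).toReal * r ^ d * g x|
        ≤ C₁ * r ^ (d + 2)) :
    ∀ x, g x ≤ (1 + (d : ℝ) / 2) /
      ((volume (ball (0 : EuclideanSpace ℝ (Fin d)) 1)).toReal *
        ((d : ℝ) / (2 * C₁)) ^ ((d : ℝ) / ((d : ℝ) + 2))) := by
  intro x
  set cd := (volume (ball (0 : EuclideanSpace ℝ (Fin d)) 1)).toReal with hcd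
  have : Fact (0 < d) := ⟨hd⟩
  have hcd_pos : 0 < cd := by
    rw [hcd]
    exact ENNReal.toReal_pos (measure_ball_pos _ _ one_pos).ne' measure_ball_lt_top.ne
  set A : ℝ := (d : ℝ) / (2 * C₁) with hA
  have hA_pos : 0 < A := div_pos (Nat.cast_pos.mpr hd) (by positivity)
  set r : ℝ := A ^ (1 / ((d : ℝ) + 2)) with hr
  have hr_pos : 0 < r := Real.rpow_pos_of_pos hA_pos _
  have h2 : ((d : ℝ) + 2) ≠ 0 := by positivity
  have hrd : r ^ d = A ^ ((d : ℝ) / ((d : ℝ) + 2)) := by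
    rw [hr, ← Real.rpow_natCast (A ^ _) d, ← Real.rpow_mul hA_pos.le]
    congr 1
    field_simp
  have hrd2 : r ^ (d + 2) = A := by
    rw [hr, ← Real.rpow_natCast (A ^ _) (d + 2), ← Real.rpow_mul hA_pos.le]
    rw [show (1 / ((d : ℝ) + 2)) * ((d + 2 : ℕ) : ℝ) = 1 by push_cast; field_simp]
    exact Real.rpow_one A
  have hint : (∫ y in closedBall x r, g y) ≤ 1 := by
    rw [← hg_int]
    exact setIntegral_le_integral hg_integrable (Filter.Eventually.of_forall hg_nonneg)
  have hkey : cd * r ^ d * g x ≤ 1 + (d : ℝ) / 2 := by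
    have h := (abs_le.mp (hP x r hr_pos)).1
    have hCA : C₁ * r ^ (d + 2) = (d : ℝ) / 2 := by
      rw [hrd2, hA]; field_simp
    nlinarith [h, hint]
  have hden_pos : 0 < cd * A ^ ((d : ℝ) / ((d : ℝ) + 2)) :=
    mul_pos hcd_pos (Real.rpow_pos_of_pos hA_pos _)
  rw [le_div_iff₀ hden_pos]
  calc g x * (cd * A ^ ((d : ℝ) / ((d : ℝ) + 2))) = cd * r ^ d * g x := by rw [hrd]; ring
    _ ≤ 1 + (d : ℝ) / 2 := hkey
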